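/- Let z ∈ [0, 1] and take the five-point scheme with parameters σ = z(1 − z²)/6 and τ = −σ/2 = −z(1 − z²)/12 (a skewed four-point, third-order accurate scheme). If Φ : ℤ → ℝ is square-summable, then the sequence Ψ with Ψ_j := (A(z)Φ)_j is square-summable and ∑_{j∈ℤ} Ψ_j² ≤ ∑_{j∈ℤ} Φ_j²; that is, A(z) is a contraction on ℓ²(ℤ). -/

import Mathlib

/-- Backward difference `(DΦ)_j = Φ_j - Φ_{j-1}`. -/
noncomputable def Dd (Φ : ℤ → ℝ) (j : ℤ) : ℝ := Φ j - Φ (j - 1)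

/-- Centered difference `(D₀Φ)_j = (Φ_{j+1} - Φ_{j-1})/2`. -/
noncomputable def D0 (Φ : ℤ → ℝ) (j : ℤ) : ℝ := (Φ (j + 1) - Φ (j - 1)) / 2

/-- Discrete Laplacian `(ΔΦ)_j = Φ_{j-1} - 2Φ_j + Φ_{j+1}`. -/
noncomputable def Lap (Φ : ℤ → ℝ) (j : ℤ) : ℝ := Φ (j - 1) - 2 * Φ j + Φ (j + 1)

/-- `(DΔΦ)_j = (ΔΦ)_j - (ΔΦ)_{j-1}`. -/
noncomputable def DLap (Φ : ℤ → ℝ) (j : ℤ) : ℝ := Lap Φ j - Lap Φ (j - 1)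

/-- `(D₀ΔΦ)_j = (-Φ_{j-2} + 2Φ_{j-1} - 2Φ_{j+1} + Φ_{j+2})/2`. -/
noncomputable def D0Lap (Φ : ℤ → ℝ) (j : ℤ) : ℝ :=
  (-Φ (j - 2) + 2 * Φ (j - 1) - 2 * Φ (j + 1) + Φ (j + 2)) / 2

/-- `(Δ²Φ)_j = Φ_{j-2} - 4Φ_{j-1} + 6Φ_j - 4Φ_{j+1} + Φ_{j+2}`. -/
noncomputable def Lap2 (Φ : ℤ → ℝ) (j : ℤ) : ℝ :=
  Φ (j - 2) - 4 * Φ (j - 1) + 6 * Φ j - 4 * Φ (j + 1) + Φ (j + 2)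

/-- The five point scheme `A(z)Φ = Φ - z D₀Φ + (z²/2) ΔΦ + σ D₀ΔΦ + τ Δ²Φ`. -/
noncomputable def A5 (z σ τ : ℝ) (Φ : ℤ → ℝ) (j : ℤ) : ℝ :=
  Φ j - z * D0 Φ j + z ^ 2 / 2 * Lap Φ j + σ * D0Lap Φ j + τ * Lap2 Φ j


section Aux

/-- Translation equivalence on `ℤ`. -/
def shiftEquiv' (a : ℤ) : ℤ ≃ ℤ where
  toFun j := j + a
  invFun j := j - a
  left_inv j := by show j + a - a = j; omega
  right_inv j := by show j - a + a = j; omega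

variable {Φ : ℤ → ℝ}

lemma aux_sq_shift (hΦ : Summable fun j : ℤ => Φ j ^ 2) (a : ℤ) :
    Summable fun j : ℤ => Φ (j + a) ^ 2 := by
  have h := ((shiftEquiv' a).summable_iff (f := fun j : ℤ => Φ j ^ 2)).mpr hΦ
  simpa [Function.comp_def, shiftEquiv'] using h

lemma aux_mul {f g : ℤ → ℝ} (hf : Summable fun j : ℤ => f j ^ 2)
    (hg : Summable fun j : ℤ => g j ^ 2) :
    Summable fun j : ℤ => f j * g j := by
  have hmaj : Summable fun j : ℤ => (f j ^ 2 + g j ^ 2) / 2 := (hf.add hg).div_const 2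
  have hle : ∀ j : ℤ, |f j * g j| ≤ (f j ^ 2 + g j ^ 2) / 2 := by
    intro j
    have h := sq_nonneg (|f j| - |g j|)
    have h1 : |f j * g j| = |f j| * |g j| := abs_mul _ _
    have h2 : |f j| ^ 2 = f j ^ 2 := sq_abs _
    have h3 : |g j| ^ 2 = g j ^ 2 := sq_abs _
    nlinarith
  have habs : Summable fun j : ℤ => |f j * g j| :=
    Summable.of_nonneg_of_le (fun j => abs_nonneg _) hle hmaj
  exact habs.of_abs

lemma aux_prod_summable (hΦ : Summable fun j : ℤ => Φ j ^ 2) (a b : ℤ) :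
    Summable fun j : ℤ => Φ (j + a) * Φ (j + b) :=
  aux_mul (aux_sq_shift hΦ a) (aux_sq_shift hΦ b)

lemma aux_prod_tsum (a b d : ℤ) (h : b - a = d) :
    (∑' j : ℤ, Φ (j + a) * Φ (j + b)) = ∑' j : ℤ, Φ j * Φ (j + d) := by
  have key := (shiftEquiv' a).tsum_eq (fun j : ℤ => Φ j * Φ (j + d))
  rw [← key]
  apply tsum_congr
  intro j
  show Φ (j + a) * Φ (j + b) = Φ (j + a) * Φ (j + a + d)
  have h2 : j + a + d = j + b := by omega
  rw [h2]


lemma quad4 (hΦ : Summable fun j : ℤ => Φ j ^ 2) (a b c d : ℝ) :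
    Summable (fun j : ℤ => (a * Φ (j + (-2)) + b * Φ (j + (-1)) + c * Φ (j + 0) + d * Φ (j + 1)) ^ 2) ∧
    (∑' j : ℤ, (a * Φ (j + (-2)) + b * Φ (j + (-1)) + c * Φ (j + 0) + d * Φ (j + 1)) ^ 2)
      = (a^2 + b^2 + c^2 + d^2) * (∑' j : ℤ, Φ j * Φ (j + 0))
        + (2*(a*b + b*c + c*d)) * (∑' j : ℤ, Φ j * Φ (j + 1))
        + (2*(a*c + b*d)) * (∑' j : ℤ, Φ j * Φ (j + 2))
        + (2*(a*d)) * (∑' j : ℤ, Φ j * Φ (j + 3)) := by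
  have hexp : ∀ j : ℤ, (a * Φ (j + (-2)) + b * Φ (j + (-1)) + c * Φ (j + 0) + d * Φ (j + 1)) ^ 2
      = a*a * (Φ (j + (-2)) * Φ (j + (-2))) + 2*(a*b) * (Φ (j + (-2)) * Φ (j + (-1))) + 2*(a*c) * (Φ (j + (-2)) * Φ (j + (0))) + 2*(a*d) * (Φ (j + (-2)) * Φ (j + (1))) + b*b * (Φ (j + (-1)) * Φ (j + (-1))) + 2*(b*c) * (Φ (j + (-1)) * Φ (j + (0))) + 2*(b*d) * (Φ (j + (-1)) * Φ (j + (1))) + c*c * (Φ (j + (0)) * Φ (j + (0))) + 2*(c*d) * (Φ (j + (0)) * Φ (j + (1))) + d*d * (Φ (j + (1)) * Φ (j + (1))) := by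
    intro j; ring
  have s0 : Summable (fun j : ℤ => a*a * (Φ (j + (-2)) * Φ (j + (-2)))) := (aux_prod_summable hΦ (-2) (-2)).mul_left _
  have s1 : Summable (fun j : ℤ => 2*(a*b) * (Φ (j + (-2)) * Φ (j + (-1)))) := (aux_prod_summable hΦ (-2) (-1)).mul_left _
  have s2 : Summable (fun j : ℤ => 2*(a*c) * (Φ (j + (-2)) * Φ (j + (0)))) := (aux_prod_summable hΦ (-2) (0)).mul_left _
  have s3 : Summable (fun j : ℤ => 2*(a*d) * (Φ (j + (-2)) * Φ (j + (1)))) := (aux_prod_summable hΦ (-2) (1)).mul_left _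
  have s4 : Summable (fun j : ℤ => b*b * (Φ (j + (-1)) * Φ (j + (-1)))) := (aux_prod_summable hΦ (-1) (-1)).mul_left _
  have s5 : Summable (fun j : ℤ => 2*(b*c) * (Φ (j + (-1)) * Φ (j + (0)))) := (aux_prod_summable hΦ (-1) (0)).mul_left _
  have s6 : Summable (fun j : ℤ => 2*(b*d) * (Φ (j + (-1)) * Φ (j + (1)))) := (aux_prod_summable hΦ (-1) (1)).mul_left _
  have s7 : Summable (fun j : ℤ => c*c * (Φ (j + (0)) * Φ (j + (0)))) := (aux_prod_summable hΦ (0) (0)).mul_left _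
  have s8 : Summable (fun j : ℤ => 2*(c*d) * (Φ (j + (0)) * Φ (j + (1)))) := (aux_prod_summable hΦ (0) (1)).mul_left _
  have s9 : Summable (fun j : ℤ => d*d * (Φ (j + (1)) * Φ (j + (1)))) := (aux_prod_summable hΦ (1) (1)).mul_left _
  have A1 : Summable (fun j : ℤ => a*a * (Φ (j + (-2)) * Φ (j + (-2))) + 2*(a*b) * (Φ (j + (-2)) * Φ (j + (-1)))) := s0.add s1
  have A2 : Summable (fun j : ℤ => a*a * (Φ (j + (-2)) * Φ (j + (-2))) + 2*(a*b) * (Φ (j + (-2)) * Φ (j + (-1))) + 2*(a*c) * (Φ (j + (-2)) * Φ (j + (0)))) := A1.add s2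
  have A3 : Summable (fun j : ℤ => a*a * (Φ (j + (-2)) * Φ (j + (-2))) + 2*(a*b) * (Φ (j + (-2)) * Φ (j + (-1))) + 2*(a*c) * (Φ (j + (-2)) * Φ (j + (0))) + 2*(a*d) * (Φ (j + (-2)) * Φ (j + (1)))) := A2.add s3
  have A4 : Summable (fun j : ℤ => a*a * (Φ (j + (-2)) * Φ (j + (-2))) + 2*(a*b) * (Φ (j + (-2)) * Φ (j + (-1))) + 2*(a*c) * (Φ (j + (-2)) * Φ (j + (0))) + 2*(a*d) * (Φ (j + (-2)) * Φ (j + (1))) + b*b * (Φ (j + (-1)) * Φ (j + (-1)))) := A3.add s4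
  have A5 : Summable (fun j : ℤ => a*a * (Φ (j + (-2)) * Φ (j + (-2))) + 2*(a*b) * (Φ (j + (-2)) * Φ (j + (-1))) + 2*(a*c) * (Φ (j + (-2)) * Φ (j + (0))) + 2*(a*d) * (Φ (j + (-2)) * Φ (j + (1))) + b*b * (Φ (j + (-1)) * Φ (j + (-1))) + 2*(b*c) * (Φ (j + (-1)) * Φ (j + (0)))) := A4.add s5
  have A6 : Summable (fun j : ℤ => a*a * (Φ (j + (-2)) * Φ (j + (-2))) + 2*(a*b) * (Φ (j + (-2)) * Φ (j + (-1))) + 2*(a*c) * (Φ (j + (-2)) * Φ (j + (0))) + 2*(a*d) * (Φ (j + (-2)) * Φ (j + (1))) + b*b * (Φ (j + (-1)) * Φ (j + (-1))) + 2*(b*c) * (Φ (j + (-1)) * Φ (j + (0))) + 2*(b*d) * (Φ (j + (-1)) * Φ (j + (1)))) := A5.add s6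
  have A7 : Summable (fun j : ℤ => a*a * (Φ (j + (-2)) * Φ (j + (-2))) + 2*(a*b) * (Φ (j + (-2)) * Φ (j + (-1))) + 2*(a*c) * (Φ (j + (-2)) * Φ (j + (0))) + 2*(a*d) * (Φ (j + (-2)) * Φ (j + (1))) + b*b * (Φ (j + (-1)) * Φ (j + (-1))) + 2*(b*c) * (Φ (j + (-1)) * Φ (j + (0))) + 2*(b*d) * (Φ (j + (-1)) * Φ (j + (1))) + c*c * (Φ (j + (0)) * Φ (j + (0)))) := A6.add s7
  have A8 : Summable (fun j : ℤ => a*a * (Φ (j + (-2)) * Φ (j + (-2))) + 2*(a*b) * (Φ (j + (-2)) * Φ (j + (-1))) + 2*(a*c) * (Φ (j + (-2)) * Φ (j + (0))) + 2*(a*d) * (Φ (j + (-2)) * Φ (j + (1))) + b*b * (Φ (j + (-1)) * Φ (j + (-1))) + 2*(b*c) * (Φ (j + (-1)) * Φ (j + (0))) + 2*(b*d) * (Φ (j + (-1)) * Φ (j + (1))) + c*c * (Φ (j + (0)) * Φ (j + (0))) + 2*(c*d) * (Φ (j + (0)) * Φ (j + (1)))) := A7.add s8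
  have A9 : Summable (fun j : ℤ => a*a * (Φ (j + (-2)) * Φ (j + (-2))) + 2*(a*b) * (Φ (j + (-2)) * Φ (j + (-1))) + 2*(a*c) * (Φ (j + (-2)) * Φ (j + (0))) + 2*(a*d) * (Φ (j + (-2)) * Φ (j + (1))) + b*b * (Φ (j + (-1)) * Φ (j + (-1))) + 2*(b*c) * (Φ (j + (-1)) * Φ (j + (0))) + 2*(b*d) * (Φ (j + (-1)) * Φ (j + (1))) + c*c * (Φ (j + (0)) * Φ (j + (0))) + 2*(c*d) * (Φ (j + (0)) * Φ (j + (1))) + d*d * (Φ (j + (1)) * Φ (j + (1)))) := A8.add s9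
  refine ⟨(summable_congr hexp).mpr A9, ?_⟩
  rw [tsum_congr hexp]
  rw [Summable.tsum_add A8 s9, Summable.tsum_add A7 s8, Summable.tsum_add A6 s7, Summable.tsum_add A5 s6, Summable.tsum_add A4 s5, Summable.tsum_add A3 s4, Summable.tsum_add A2 s3, Summable.tsum_add A1 s2, Summable.tsum_add s0 s1]
  simp only [tsum_mul_left]
  rw [aux_prod_tsum (-2) (-2) (0) (by norm_num), aux_prod_tsum (-2) (-1) (1) (by norm_num), aux_prod_tsum (-2) (0) (2) (by norm_num), aux_prod_tsum (-2) (1) (3) (by norm_num), aux_prod_tsum (-1) (-1) (0) (by norm_num), aux_prod_tsum (-1) (0) (1) (by norm_num), aux_prod_tsum (-1) (1) (2) (by norm_num), aux_prod_tsum (0) (0) (0) (by norm_num), aux_prod_tsum (0) (1) (1) (by norm_num), aux_prod_tsum (1) (1) (0) (by norm_num)]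
  ring

end Aux

set_option maxHeartbeats 2000000 in
/-- The skewed four-point third order scheme `σ = z(1 - z²)/6`, `τ = -σ/2` is a
contraction on `ℓ²(ℤ)` for `z ∈ [0, 1]`. -/
theorem five_point_upwind_like_contraction (z : ℝ) (hz : z ∈ Set.Icc (0 : ℝ) 1)
    (Φ : ℤ → ℝ) (hΦ : Summable (fun j : ℤ => (Φ j) ^ 2)) :
    Summable (fun j : ℤ => (A5 z (z * (1 - z ^ 2) / 6) (-(z * (1 - z ^ 2) / 6) / 2) Φ j) ^ 2) ∧
      ∑' j : ℤ, (A5 z (z * (1 - z ^ 2) / 6) (-(z * (1 - z ^ 2) / 6) / 2) Φ j) ^ 2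
        ≤ ∑' j : ℤ, (Φ j) ^ 2 := by
  obtain ⟨hz0, hz1⟩ := hz
  have hψ : ∀ j : ℤ, A5 z (z * (1 - z ^ 2) / 6) (-(z * (1 - z ^ 2) / 6) / 2) Φ j
      = (-z/6 + z^3/6) * Φ (j + (-2)) + (z + z^2/2 - z^3/2) * Φ (j + (-1))
        + (1 - z/2 - z^2 + z^3/2) * Φ (j + 0) + (-z/3 + z^2/2 - z^3/6) * Φ (j + 1) := by
    intro j
    have e2 : j + (-2 : ℤ) = j - 2 := by ring
    have e1 : j + (-1 : ℤ) = j - 1 := by ring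
    have e0 : j + (0 : ℤ) = j := by ring
    rw [e2, e1, e0]
    simp only [A5, D0, Lap, D0Lap, Lap2]
    ring
  have h1 := quad4 hΦ (-z/6 + z^3/6) (z + z^2/2 - z^3/2) (1 - z/2 - z^2 + z^3/2) (-z/3 + z^2/2 - z^3/6)
  have h2 := quad4 hΦ (0:ℝ) 1 (-2) 1
  have h3 := quad4 hΦ (-1:ℝ) 3 (-3) 1
  have hsum : Summable (fun j : ℤ => (A5 z (z * (1 - z ^ 2) / 6) (-(z * (1 - z ^ 2) / 6) / 2) Φ j) ^ 2) := by
    refine (summable_congr ?_).mpr h1.1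
    intro j; rw [hψ j]
  refine ⟨hsum, ?_⟩
  have hval : (∑' j : ℤ, (A5 z (z * (1 - z ^ 2) / 6) (-(z * (1 - z ^ 2) / 6) / 2) Φ j) ^ 2)
      = ∑' j : ℤ, ((-z/6 + z^3/6) * Φ (j + (-2)) + (z + z^2/2 - z^3/2) * Φ (j + (-1))
        + (1 - z/2 - z^2 + z^3/2) * Φ (j + 0) + (-z/3 + z^2/2 - z^3/6) * Φ (j + 1)) ^ 2 :=
    tsum_congr fun j => by rw [hψ j]
  have hr : (∑' j : ℤ, Φ j ^ 2) = ∑' j : ℤ, Φ j * Φ (j + 0) :=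
    tsum_congr fun j => by rw [add_zero]; ring
  set x0 := ∑' j : ℤ, Φ j * Φ (j + 0) with hx0
  set x1 := ∑' j : ℤ, Φ j * Φ (j + 1) with hx1
  set x2 := ∑' j : ℤ, Φ j * Φ (j + 2) with hx2
  set x3 := ∑' j : ℤ, Φ j * Φ (j + 3) with hx3
  rw [hval, h1.2, hr]
  have hQ2 : (0:ℝ) ≤ (((0:ℝ))^2 + (1)^2 + (-2)^2 + (1)^2) * x0 + (2*(((0:ℝ))*(1) + (1)*(-2) + (-2)*(1))) * x1 + (2*(((0:ℝ))*(-2) + (1)*(1))) * x2 + (2*(((0:ℝ))*(1))) * x3 := by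
    rw [← h2.2]; exact tsum_nonneg fun j => sq_nonneg _
  have hQ3 : (0:ℝ) ≤ (((-1:ℝ))^2 + (3)^2 + (-3)^2 + (1)^2) * x0 + (2*(((-1:ℝ))*(3) + (3)*(-3) + (-3)*(1))) * x1 + (2*(((-1:ℝ))*(-3) + (3)*(1))) * x2 + (2*(((-1:ℝ))*(1))) * x3 := by
    rw [← h3.2]; exact tsum_nonneg fun j => sq_nonneg _
  have hB : (0:ℝ) ≤ z*(1-z^2)*(2-z)/12 := by
    have h1z : (0:ℝ) ≤ 1 - z^2 := by nlinarith
    have h2z : (0:ℝ) ≤ 2 - z := by linarith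
    positivity
  have hC : (0:ℝ) ≤ z^2*(1-z^2)*(1-z)*(2-z)/36 := by
    have h1z : (0:ℝ) ≤ 1 - z^2 := by nlinarith
    have h2z : (0:ℝ) ≤ 2 - z := by linarith
    have h3z : (0:ℝ) ≤ 1 - z := by linarith
    positivity
  have key : (((-z/6 + z^3/6))^2 + ((z + z^2/2 - z^3/2))^2 + ((1 - z/2 - z^2 + z^3/2))^2 + ((-z/3 + z^2/2 - z^3/6))^2) * x0 + (2*(((-z/6 + z^3/6))*((z + z^2/2 - z^3/2)) + ((z + z^2/2 - z^3/2))*((1 - z/2 - z^2 + z^3/2)) + ((1 - z/2 - z^2 + z^3/2))*((-z/3 + z^2/2 - z^3/6)))) * x1 + (2*(((-z/6 + z^3/6))*((1 - z/2 - z^2 + z^3/2)) + ((z + z^2/2 - z^3/2))*((-z/3 + z^2/2 - z^3/6)))) * x2 + (2*(((-z/6 + z^3/6))*((-z/3 + z^2/2 - z^3/6)))) * x3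
      = x0 - ((z*(1-z^2)*(2-z)/12) * ((((0:ℝ))^2 + (1)^2 + (-2)^2 + (1)^2) * x0 + (2*(((0:ℝ))*(1) + (1)*(-2) + (-2)*(1))) * x1 + (2*(((0:ℝ))*(-2) + (1)*(1))) * x2 + (2*(((0:ℝ))*(1))) * x3) + (z^2*(1-z^2)*(1-z)*(2-z)/36) * ((((-1:ℝ))^2 + (3)^2 + (-3)^2 + (1)^2) * x0 + (2*(((-1:ℝ))*(3) + (3)*(-3) + (-3)*(1))) * x1 + (2*(((-1:ℝ))*(-3) + (3)*(1))) * x2 + (2*(((-1:ℝ))*(1))) * x3)) := by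
    ring
  have hm1 : (0:ℝ) ≤ (z*(1-z^2)*(2-z)/12) * ((((0:ℝ))^2 + (1)^2 + (-2)^2 + (1)^2) * x0 + (2*(((0:ℝ))*(1) + (1)*(-2) + (-2)*(1))) * x1 + (2*(((0:ℝ))*(-2) + (1)*(1))) * x2 + (2*(((0:ℝ))*(1))) * x3) := mul_nonneg hB hQ2
  have hm2 : (0:ℝ) ≤ (z^2*(1-z^2)*(1-z)*(2-z)/36) * ((((-1:ℝ))^2 + (3)^2 + (-3)^2 + (1)^2) * x0 + (2*(((-1:ℝ))*(3) + (3)*(-3) + (-3)*(1))) * x1 + (2*(((-1:ℝ))*(-3) + (3)*(1))) * x2 + (2*(((-1:ℝ))*(1))) * x3) := mul_nonneg hC hQ3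
  linarith [key, hm1, hm2]
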